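/- arXiv:1005.1631 — 2 statements merged into one kernel-verified Lean document; each statement's English description precedes it below -/
import Mathlib

section
/- For every n ≥ 1, the associahedron γ-polynomials Γ_n(τ) = Σ_{i=0}^{⌊n/2⌋} (1/(i+1))·binom(2i,i)·binom(n,2i)·τ^i satisfy the recurrence Γ_n(τ) = Γ_{n-1}(τ) + τ·Σ_{i=1}^{n-1} Γ_{i-1}(τ)·Γ_{n-i-1}(τ), with Γ_0 = 1. -/
open Finset Polynomial

lemma sum_range_choose' (N p : ℕ) : ∑ m ∈ range N, m.choose p = N.choose (p + 1) := by
  induction N with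
  | zero => simp
  | succ N ih => rw [Finset.sum_range_succ, ih, Nat.choose_succ_succ' N p, Nat.add_comm]

/-- lower-index Vandermonde -/
lemma vand (p : ℕ) : ∀ q M : ℕ,
    ∑ m ∈ range (M + 1), m.choose p * (M - m).choose q = (M + 1).choose (p + q + 1) := by
  intro q
  induction q with
  | zero =>
    intro M
    simp only [Nat.choose_zero_right, mul_one]
    rw [sum_range_choose']
  | succ q ih =>
    intro M
    have h2 : p + (q + 1) = p + q + 1 := rfl
    rw [h2]
    induction M with
    | zero => simp [Nat.choose_eq_zero_of_lt (show (1:ℕ) < p+q+1+1 by omega)]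
    | succ M ihM =>
      rw [Finset.sum_range_succ]
      have h1 : ∀ m ∈ range (M + 1),
          m.choose p * (M + 1 - m).choose (q + 1)
            = m.choose p * (M - m).choose q + m.choose p * (M - m).choose (q + 1) := by
        intro m hm
        rw [Finset.mem_range] at hm
        have : M + 1 - m = (M - m) + 1 := by omega
        rw [this, Nat.choose_succ_succ, mul_add]
      rw [Finset.sum_congr rfl h1, Finset.sum_add_distrib, ih M, ihM]
      simp only [Nat.sub_self, Nat.choose_succ_succ (p + q + 1)]
      have : (M+1).choose (p + q + 1) + (M + 1).choose (p + q + 1 + 1) +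
          (M + 1).choose p * Nat.choose 0 (q + 1) = (M+1+1).choose (p+q+1+1) := by
        simp [Nat.choose_succ_succ (M+1)]
      omega

lemma cat_cast (i : ℕ) :
    (1 / (i + 1 : ℚ)) * ((2 * i).choose i) = (catalan i : ℚ) := by
  have h : (i + 1) * catalan i = (2 * i).choose i := by
    simpa [Nat.centralBinom] using succ_mul_catalan_eq_centralBinom i
  have hq : ((i : ℚ) + 1) ≠ 0 := by positivity
  field_simp
  exact_mod_cast (h.symm.trans (by ring_nf))

/-- The γ-polynomial of the associahedron `As^n`:
`Γ_n(τ) = Σ_{i=0}^{⌊n/2⌋} (1/(i+1))·binom(2i,i)·binom(n,2i)·τ^i`. -/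
noncomputable def gammaAs (n : ℕ) : Polynomial ℚ :=
  ∑ i ∈ Finset.range (n / 2 + 1),
    Polynomial.C ((1 / (i + 1 : ℚ)) * ((2 * i).choose i) * (n.choose (2 * i))) *
      Polynomial.X ^ i

lemma coeff_gammaAs (n k : ℕ) :
    (gammaAs n).coeff k = (catalan k : ℚ) * n.choose (2 * k) := by
  unfold gammaAs
  rw [Polynomial.finset_sum_coeff, Finset.sum_eq_single k]
  · rw [Polynomial.coeff_C_mul, Polynomial.coeff_X_pow, if_pos rfl, mul_one, cat_cast]
  · intro i _ hne
    rw [Polynomial.coeff_C_mul, Polynomial.coeff_X_pow, if_neg (Ne.symm hne), mul_zero]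
  · intro hk
    rw [Finset.mem_range] at hk
    have : n.choose (2 * k) = 0 := Nat.choose_eq_zero_of_lt (by omega)
    simp [this]

theorem gammaAs_recurrence (n : ℕ) (hn : 1 ≤ n) :
    gammaAs n =
      gammaAs (n - 1) +
        Polynomial.X * ∑ i ∈ Finset.Icc 1 (n - 1), gammaAs (i - 1) * gammaAs (n - i - 1) := by
  match n, hn with
  | 1, _ =>
    norm_num [gammaAs]
  | (n' + 2), _ =>
    set n := n' + 2 with hndef
    ext k
    rw [Polynomial.coeff_add, coeff_gammaAs, coeff_gammaAs]
    rcases k with _ | m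
    · simp [Polynomial.mul_coeff_zero]
    · rw [Polynomial.coeff_X_mul, Polynomial.finset_sum_coeff]
      have hmul : ∀ j ∈ Icc 1 (n - 1), (gammaAs (j - 1) * gammaAs (n - j - 1)).coeff m
          = ∑ ab ∈ antidiagonal m,
              (catalan ab.1 : ℚ) * ((j - 1).choose (2 * ab.1)) *
                ((catalan ab.2 : ℚ) * ((n - j - 1).choose (2 * ab.2))) := by
        intro j _
        rw [Polynomial.coeff_mul]
        exact Finset.sum_congr rfl fun ab _ => by rw [coeff_gammaAs, coeff_gammaAs]
      rw [Finset.sum_congr rfl hmul, Finset.sum_comm]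
      have hinner : ∀ ab ∈ antidiagonal m,
          ∑ j ∈ Icc 1 (n - 1),
              (catalan ab.1 : ℚ) * ((j - 1).choose (2 * ab.1)) *
                ((catalan ab.2 : ℚ) * ((n - j - 1).choose (2 * ab.2)))
            = (catalan ab.1 : ℚ) * (catalan ab.2 : ℚ)
                * ((n - 1).choose (2 * m + 1)) := by
        intro ab hab
        rw [Finset.HasAntidiagonal.mem_antidiagonal] at hab
        have key : ∑ j ∈ Icc 1 (n - 1),
            ((j - 1).choose (2 * ab.1)) * ((n - j - 1).choose (2 * ab.2))
            = (n - 1).choose (2 * m + 1) := by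
          have hIcc : Icc 1 (n - 1) = Ico 1 (n' + 2) := by
            rw [← Finset.Ico_add_one_right_eq_Icc]; congr 1
          rw [hIcc, Finset.sum_Ico_eq_sum_range]
          have : n' + 2 - 1 = n' + 1 := by omega
          rw [this]
          have hterm : ∀ i ∈ range (n' + 1),
              ((1 + i - 1).choose (2 * ab.1)) * ((n - (1 + i) - 1).choose (2 * ab.2))
                = i.choose (2 * ab.1) * ((n' - i).choose (2 * ab.2)) := by
            intro i hi
            rw [Finset.mem_range] at hi
            congr 2 <;> omega
          rw [Finset.sum_congr rfl hterm, vand]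
          congr 1
          omega
        calc ∑ j ∈ Icc 1 (n - 1),
              (catalan ab.1 : ℚ) * ((j - 1).choose (2 * ab.1)) *
                ((catalan ab.2 : ℚ) * ((n - j - 1).choose (2 * ab.2)))
            = (catalan ab.1 : ℚ) * (catalan ab.2 : ℚ) *
                ∑ j ∈ Icc 1 (n - 1),
                  (((j - 1).choose (2 * ab.1)) * ((n - j - 1).choose (2 * ab.2)) : ℚ) := by
              rw [Finset.mul_sum]; exact Finset.sum_congr rfl fun j _ => by ring
          _ = (catalan ab.1 : ℚ) * (catalan ab.2 : ℚ)
                * ((n - 1).choose (2 * m + 1)) := by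
              rw [← key]; push_cast; ring
      rw [Finset.sum_congr rfl hinner, ← Finset.sum_mul]
      have hcat : ∑ ab ∈ antidiagonal m,
          (catalan ab.1 : ℚ) * (catalan ab.2 : ℚ) = (catalan (m + 1) : ℚ) := by
        rw [catalan_succ']
        push_cast
        rfl
      rw [hcat]
      have hpascal : n.choose (2 * (m + 1))
          = (n - 1).choose (2 * m + 1) + (n - 1).choose (2 * (m + 1)) := by
        have h1 : n = (n - 1) + 1 := by omega
        have h2 : 2 * (m + 1) = (2 * m + 1) + 1 := by ring
        rw [h2]
        conv_lhs => rw [h1]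
        exact Nat.choose_succ_succ _ _
      rw [hpascal]
      push_cast
      ring
end

section
/- For all natural numbers n ≥ 1 and 1 ≤ i ≤ n: (1/(n+1))·binom(n+1,i)·binom(n+1,i+1) ≤ Σ_{k=i}^{n} binom(n,k)·A(k,i−1), where A(m,k) is the Eulerian number. -/
open Finset
open scoped Classical

/-- The number of descents of a permutation `σ` of `Fin m`. -/
noncomputable def numDescents (m : ℕ) (σ : Equiv.Perm (Fin m)) : ℕ :=
  ((Finset.range m).filter fun i =>
    ∃ h : i + 1 < m, σ ⟨i + 1, h⟩ < σ ⟨i, Nat.lt_of_succ_lt h⟩).card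

/-- The Eulerian number `A(m,k)`: the number of permutations of `{1,…,m}` with exactly
`k` descents. -/
noncomputable def eulerian (m k : ℕ) : ℕ :=
  ((Finset.univ : Finset (Equiv.Perm (Fin m))).filter fun σ => numDescents m σ = k).card

/- descent set -/
noncomputable def dset (m : ℕ) (σ : Equiv.Perm (Fin m)) : Finset ℕ :=
  (Finset.range m).filter fun i =>
    ∃ h : i + 1 < m, σ ⟨i + 1, h⟩ < σ ⟨i, Nat.lt_of_succ_lt h⟩

lemma numDescents_eq_card_dset (m : ℕ) (σ : Equiv.Perm (Fin m)) :
    numDescents m σ = (dset m σ).card := rfl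

lemma mem_dset {m : ℕ} {σ : Equiv.Perm (Fin m)} {t : ℕ} :
    t ∈ dset m σ ↔ ∃ h : t + 1 < m, σ ⟨t + 1, h⟩ < σ ⟨t, Nat.lt_of_succ_lt h⟩ := by
  constructor
  · intro h; exact (Finset.mem_filter.1 h).2
  · rintro ⟨h, hlt⟩
    exact Finset.mem_filter.2 ⟨Finset.mem_range.2 (Nat.lt_of_succ_lt h), h, hlt⟩

lemma lt_of_mem_dset {m : ℕ} {σ : Equiv.Perm (Fin m)} {t : ℕ} (h : t ∈ dset m σ) :
    t + 1 < m := (mem_dset.1 h).1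

section Insert

variable {k : ℕ}

def wordIns (σ : Equiv.Perm (Fin k)) (p : Fin (k + 1)) : Fin (k + 1) → Fin (k + 1) :=
  p.insertNth (Fin.last k) (fun m => (σ m).castSucc)

lemma wordIns_injective (σ : Equiv.Perm (Fin k)) (p : Fin (k + 1)) :
    Function.Injective (wordIns σ p) := by
  intro x y hxy
  rcases eq_or_ne x p with rfl | hx
  · rcases eq_or_ne y x with rfl | hy
    · rfl
    · obtain ⟨z, rfl⟩ := Fin.exists_succAbove_eq hy
      rw [wordIns, Fin.insertNth_apply_same, Fin.insertNth_apply_succAbove] at hxy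
      exact absurd hxy.symm (ne_of_lt (Fin.castSucc_lt_last _))
  · obtain ⟨z, rfl⟩ := Fin.exists_succAbove_eq hx
    rcases eq_or_ne y p with rfl | hy
    · rw [wordIns, Fin.insertNth_apply_same, Fin.insertNth_apply_succAbove] at hxy
      exact absurd hxy (ne_of_lt (Fin.castSucc_lt_last _))
    · obtain ⟨w, rfl⟩ := Fin.exists_succAbove_eq hy
      rw [wordIns, Fin.insertNth_apply_succAbove, Fin.insertNth_apply_succAbove] at hxy
      have := Fin.castSucc_injective _ hxy
      rw [σ.injective this]

noncomputable def insMax (σ : Equiv.Perm (Fin k)) (p : Fin (k + 1)) :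
    Equiv.Perm (Fin (k + 1)) :=
  Equiv.ofBijective (wordIns σ p)
    (Finite.injective_iff_bijective.1 (wordIns_injective σ p))

lemma insMax_apply (σ : Equiv.Perm (Fin k)) (p : Fin (k + 1)) (x : Fin (k + 1)) :
    insMax σ p x = wordIns σ p x := rfl

lemma insMax_apply_same (σ : Equiv.Perm (Fin k)) (p : Fin (k + 1)) :
    insMax σ p p = Fin.last k := by
  rw [insMax_apply, wordIns, Fin.insertNth_apply_same]

lemma insMax_apply_lt (σ : Equiv.Perm (Fin k)) (p : Fin (k + 1)) (t : ℕ)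
    (h : t < k + 1) (ht : t < (p : ℕ)) (htk : t < k) :
    insMax σ p ⟨t, h⟩ = (σ ⟨t, htk⟩).castSucc := by
  have hsa : p.succAbove ⟨t, htk⟩ = ⟨t, h⟩ := by
    rw [Fin.succAbove_of_castSucc_lt]
    · rfl
    · rw [Fin.lt_def]; exact ht
  rw [← hsa, insMax_apply, wordIns, Fin.insertNth_apply_succAbove]

lemma insMax_apply_gt (σ : Equiv.Perm (Fin k)) (p : Fin (k + 1)) (t : ℕ)
    (h : t < k + 1) (ht : (p : ℕ) < t) (ht1 : t - 1 < k) :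
    insMax σ p ⟨t, h⟩ = (σ ⟨t - 1, ht1⟩).castSucc := by
  have hsa : p.succAbove ⟨t - 1, ht1⟩ = ⟨t, h⟩ := by
    rw [Fin.succAbove_of_le_castSucc]
    · ext; simp [Fin.val_succ]; omega
    · rw [Fin.le_def]; simp; omega
  rw [← hsa, insMax_apply, wordIns, Fin.insertNth_apply_succAbove]

lemma insMax_inj {σ σ' : Equiv.Perm (Fin k)} {p p' : Fin (k + 1)}
    (h : insMax σ p = insMax σ' p') : σ = σ' ∧ p = p' := by
  have hp : p = p' := by
    by_contra hne
    obtain ⟨z, hz⟩ := Fin.exists_succAbove_eq hne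
    have h1 : insMax σ' p' p = (σ' z).castSucc := by
      conv_lhs => rw [← hz]
      rw [insMax_apply, wordIns, Fin.insertNth_apply_succAbove]
    have h2 : insMax σ p p = Fin.last k := insMax_apply_same σ p
    rw [h] at h2; rw [h1] at h2
    exact absurd h2 (ne_of_lt (Fin.castSucc_lt_last _))
  subst hp
  refine ⟨?_, rfl⟩
  ext m
  have h1 : insMax σ p (p.succAbove m) = (σ m).castSucc := by
    rw [insMax_apply, wordIns, Fin.insertNth_apply_succAbove]
  have h2 : insMax σ' p (p.succAbove m) = (σ' m).castSucc := by
    rw [insMax_apply, wordIns, Fin.insertNth_apply_succAbove]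
  rw [h] at h1; rw [h1] at h2
  have := Fin.castSucc_injective _ h2
  rw [this]



lemma insMax_apply_same' (σ : Equiv.Perm (Fin k)) (p : Fin (k + 1)) (t : ℕ)
    (h : t < k + 1) (ht : t = (p : ℕ)) : insMax σ p ⟨t, h⟩ = Fin.last k := by
  have : (⟨t, h⟩ : Fin (k + 1)) = p := by ext; exact ht
  rw [this, insMax_apply_same]

lemma insMax_apply_gt' (σ : Equiv.Perm (Fin k)) (p : Fin (k + 1)) (t : ℕ)
    (h : t < k + 1) (ht : (p : ℕ) < t) (s : ℕ) (hs : s < k) (hst : s = t - 1) :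
    insMax σ p ⟨t, h⟩ = (σ ⟨s, hs⟩).castSucc := by
  subst hst; exact insMax_apply_gt σ p t h ht hs

lemma perm_lt_congr (σ : Equiv.Perm (Fin k)) {x y x' y' : ℕ}
    (hx : x < k) (hy : y < k) (hx' : x' < k) (hy' : y' < k)
    (ex : x = x') (ey : y = y') :
    (σ ⟨x, hx⟩ < σ ⟨y, hy⟩ ↔ σ ⟨x', hx'⟩ < σ ⟨y', hy'⟩) := by
  subst ex; subst ey; rfl

lemma dset_insMax_last (σ : Equiv.Perm (Fin k)) :
    dset (k + 1) (insMax σ (Fin.last k)) = dset k σ := by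
  have hl : ((Fin.last k : Fin (k + 1)) : ℕ) = k := Fin.val_last k
  ext t
  simp only [mem_dset]
  constructor
  · rintro ⟨h, hlt⟩
    have htk : t + 1 < k := by
      by_contra h'
      rw [insMax_apply_same' σ _ (t + 1) h (by omega)] at hlt
      exact absurd hlt (not_lt.2 (Fin.le_last _))
    refine ⟨htk, ?_⟩
    rw [insMax_apply_lt σ _ (t + 1) h (by omega) htk,
        insMax_apply_lt σ _ t (by omega) (by omega) (by omega)] at hlt
    have := Fin.castSucc_lt_castSucc_iff.1 hlt
    exact (perm_lt_congr σ _ _ _ _ rfl rfl).1 this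
  · rintro ⟨h, hlt⟩
    refine ⟨by omega, ?_⟩
    rw [insMax_apply_lt σ _ (t + 1) (by omega) (by omega) h,
        insMax_apply_lt σ _ t (by omega) (by omega) (by omega)]
    exact Fin.castSucc_lt_castSucc_iff.2 ((perm_lt_congr σ _ _ _ _ rfl rfl).1 hlt)

lemma dset_insMax_zero (σ : Equiv.Perm (Fin k)) (hk : 1 ≤ k) (p : Fin (k + 1))
    (hpv : (p : ℕ) = 0) :
    dset (k + 1) (insMax σ p) = insert 0 ((dset k σ).image (· + 1)) := by
  ext t
  simp only [mem_dset, Finset.mem_insert, Finset.mem_image]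
  constructor
  · rintro ⟨h, hlt⟩
    rcases Nat.eq_zero_or_pos t with rfl | ht
    · exact Or.inl rfl
    · refine Or.inr ⟨t - 1, ⟨by omega, ?_⟩, by omega⟩
      rw [insMax_apply_gt' σ p (t + 1) h (by omega) (t - 1 + 1) (by omega) (by omega),
          insMax_apply_gt' σ p t (by omega) (by omega) (t - 1) (by omega) rfl] at hlt
      exact Fin.castSucc_lt_castSucc_iff.1 hlt
  · rintro (rfl | ⟨s, ⟨hs1, hslt⟩, rfl⟩)
    · refine ⟨by omega, ?_⟩
      rw [insMax_apply_gt' σ p 1 (by omega) (by omega) 0 (by omega) (by omega),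
          insMax_apply_same' σ p 0 (by omega) (by omega)]
      exact Fin.castSucc_lt_last _
    · refine ⟨by omega, ?_⟩
      rw [insMax_apply_gt' σ p (s + 1 + 1) (by omega) (by omega) (s + 1) (by omega) (by omega),
          insMax_apply_gt' σ p (s + 1) (by omega) (by omega) s (by omega) (by omega)]
      exact Fin.castSucc_lt_castSucc_iff.2 hslt

lemma dset_insMax_descent (σ : Equiv.Perm (Fin k)) {d : ℕ} (hd : d ∈ dset k σ)
    (p : Fin (k + 1)) (hpv : (p : ℕ) = d + 1) :
    dset (k + 1) (insMax σ p) = (dset k σ).image (fun t => if t < d then t else t + 1) := by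
  have hd1 : d + 1 < k := lt_of_mem_dset hd
  ext m
  simp only [mem_dset, Finset.mem_image]
  constructor
  · rintro ⟨h, hlt⟩
    rcases Nat.lt_trichotomy m d with hmd | rfl | hmd
    · refine ⟨m, ⟨by omega, ?_⟩, by simp [hmd]⟩
      rw [insMax_apply_lt σ p (m + 1) h (by omega) (by omega),
          insMax_apply_lt σ p m (by omega) (by omega) (by omega)] at hlt
      exact (perm_lt_congr σ _ _ _ _ rfl rfl).1 (Fin.castSucc_lt_castSucc_iff.1 hlt)
    · exfalso
      rw [insMax_apply_same' σ p (m + 1) h (by omega)] at hlt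
      exact absurd hlt (not_lt.2 (Fin.le_last _))
    · rcases Nat.eq_or_lt_of_le hmd with hmd1 | hmd2
      · refine ⟨d, mem_dset.1 hd, ?_⟩
        rw [if_neg (lt_irrefl d)]; omega
      · refine ⟨m - 1, ⟨by omega, ?_⟩, by rw [if_neg (by omega : ¬ (m - 1 < d))]; omega⟩
        rw [insMax_apply_gt' σ p (m + 1) h (by omega) (m - 1 + 1) (by omega) (by omega),
            insMax_apply_gt' σ p m (by omega) (by omega) (m - 1) (by omega) rfl] at hlt
        exact Fin.castSucc_lt_castSucc_iff.1 hlt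
  · rintro ⟨s, ⟨hs1, hslt⟩, rfl⟩
    by_cases hsd : s < d
    · rw [if_pos hsd]
      refine ⟨by omega, ?_⟩
      rw [insMax_apply_lt σ p (s + 1) (by omega) (by omega) (by omega),
          insMax_apply_lt σ p s (by omega) (by omega) (by omega)]
      exact Fin.castSucc_lt_castSucc_iff.2 ((perm_lt_congr σ _ _ _ _ rfl rfl).1 hslt)
    · rw [if_neg hsd]
      rcases Nat.eq_or_lt_of_le (Nat.le_of_not_lt hsd) with rfl | hsd2
      · refine ⟨by omega, ?_⟩
        rw [insMax_apply_gt' σ p (d + 1 + 1) (by omega) (by omega) (d + 1) (by omega) (by omega),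
            insMax_apply_same' σ p (d + 1) (by omega) (by omega)]
        exact Fin.castSucc_lt_last _
      · refine ⟨by omega, ?_⟩
        rw [insMax_apply_gt' σ p (s + 1 + 1) (by omega) (by omega) (s + 1) (by omega) (by omega),
            insMax_apply_gt' σ p (s + 1) (by omega) (by omega) s (by omega) (by omega)]
        exact Fin.castSucc_lt_castSucc_iff.2 hslt

noncomputable def slots (σ : Equiv.Perm (Fin k)) : Finset (Fin (k + 1)) :=
  insert (Fin.last k)
    (((dset k σ).map ⟨(· + 1), fun a b h => by simpa using h⟩).attachFin
      (fun m hm => by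
        simp only [Finset.mem_map, Function.Embedding.coeFn_mk] at hm
        obtain ⟨t, ht, rfl⟩ := hm
        have := lt_of_mem_dset ht
        show t + 1 < k + 1
        omega))

lemma mem_slots {σ : Equiv.Perm (Fin k)} {p : Fin (k + 1)} :
    p ∈ slots σ ↔ p = Fin.last k ∨ ∃ t ∈ dset k σ, (p : ℕ) = t + 1 := by
  simp only [slots, Finset.mem_insert, Finset.mem_attachFin, Finset.mem_map,
    Function.Embedding.coeFn_mk]
  constructor
  · rintro (rfl | ⟨t, ht, hte⟩)
    · exact Or.inl rfl
    · exact Or.inr ⟨t, ht, hte.symm⟩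
  · rintro (rfl | ⟨t, ht, hte⟩)
    · exact Or.inl rfl
    · exact Or.inr ⟨t, ht, hte.symm⟩

lemma card_slots {σ : Equiv.Perm (Fin k)} {j : ℕ} (hσ : numDescents k σ = j) :
    (slots σ).card = j + 1 := by
  rw [slots, Finset.card_insert_of_notMem, Finset.card_attachFin, Finset.card_map,
    ← numDescents_eq_card_dset, hσ]
  intro hmem
  rw [Finset.mem_attachFin] at hmem
  simp only [Finset.mem_map, Function.Embedding.coeFn_mk, Fin.val_last] at hmem
  obtain ⟨t, ht, hte⟩ := hmem
  have := lt_of_mem_dset ht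
  change t + 1 = k at hte
  omega

lemma des_insMax_of_mem_slots {σ : Equiv.Perm (Fin k)} {j : ℕ} (hσ : numDescents k σ = j)
    {p : Fin (k + 1)} (hp : p ∈ slots σ) : numDescents (k + 1) (insMax σ p) = j := by
  rcases mem_slots.1 hp with rfl | ⟨t, ht, hte⟩
  · rw [numDescents_eq_card_dset, dset_insMax_last, ← numDescents_eq_card_dset, hσ]
  · rw [numDescents_eq_card_dset, dset_insMax_descent σ ht p hte,
      Finset.card_image_of_injOn, ← numDescents_eq_card_dset, hσ]
    intro a _ b _ hab
    simp only at hab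
    split_ifs at hab <;> omega

lemma des_insMax_zero' {σ : Equiv.Perm (Fin k)} {j : ℕ} (hσ : numDescents k σ = j)
    (hk : 1 ≤ k) : numDescents (k + 1) (insMax σ 0) = j + 1 := by
  rw [numDescents_eq_card_dset, dset_insMax_zero σ hk 0 rfl,
    Finset.card_insert_of_notMem, Finset.card_image_of_injOn, ← numDescents_eq_card_dset, hσ]
  · intro a _ b _ hab; simpa using hab
  · simp

lemma eulerian_rec (k j : ℕ) (hk : 1 ≤ k) (hj : 1 ≤ j) :
    (j + 1) * eulerian k j + eulerian k (j - 1) ≤ eulerian (k + 1) j := by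
  classical
  set N : Finset (Equiv.Perm (Fin k)) :=
    Finset.univ.filter fun σ => numDescents k σ = j with hN
  set N' : Finset (Equiv.Perm (Fin k)) :=
    Finset.univ.filter fun σ => numDescents k σ = j - 1 with hN'
  set S₁ : Finset (Equiv.Perm (Fin (k + 1))) :=
    N.biUnion (fun σ => (slots σ).image (insMax σ)) with hS₁
  set S₂ : Finset (Equiv.Perm (Fin (k + 1))) := N'.image (fun σ => insMax σ 0) with hS₂
  have hdesN : ∀ σ ∈ N, numDescents k σ = j := fun σ hσ => (Finset.mem_filter.1 hσ).2
  have hdesN' : ∀ σ ∈ N', numDescents k σ = j - 1 := fun σ hσ => (Finset.mem_filter.1 hσ).2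
  have hcard1 : S₁.card = N.card * (j + 1) := by
    rw [hS₁, Finset.card_biUnion]
    · rw [Finset.sum_congr rfl (fun σ hσ => ?_), Finset.sum_const, smul_eq_mul]
      rw [Finset.card_image_of_injective _ (fun p p' h => (insMax_inj h).2),
        card_slots (hdesN σ hσ)]
    · intro σ hσ σ' hσ' hne
      rw [Function.onFun, Finset.disjoint_left]
      rintro τ h1 h2
      obtain ⟨p, _, rfl⟩ := Finset.mem_image.1 h1
      obtain ⟨p', _, he⟩ := Finset.mem_image.1 h2
      exact hne ((insMax_inj he).1.symm)
  have hcard2 : S₂.card = N'.card :=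
    Finset.card_image_of_injective _ (fun σ σ' h => (insMax_inj h).1)
  have hsub : S₁ ∪ S₂ ⊆ Finset.univ.filter fun τ => numDescents (k + 1) τ = j := by
    intro τ hτ
    rcases Finset.mem_union.1 hτ with h | h
    · obtain ⟨σ, hσ, hp⟩ := Finset.mem_biUnion.1 h
      obtain ⟨p, hps, rfl⟩ := Finset.mem_image.1 hp
      exact Finset.mem_filter.2 ⟨Finset.mem_univ _,
        des_insMax_of_mem_slots (hdesN σ hσ) hps⟩
    · obtain ⟨σ, hσ, rfl⟩ := Finset.mem_image.1 h
      refine Finset.mem_filter.2 ⟨Finset.mem_univ _, ?_⟩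
      rw [des_insMax_zero' (hdesN' σ hσ) hk]
      omega
  have hdisj : Disjoint S₁ S₂ := by
    rw [Finset.disjoint_left]
    rintro τ h1 h2
    obtain ⟨σ, hσ, hp⟩ := Finset.mem_biUnion.1 h1
    obtain ⟨p, hps, rfl⟩ := Finset.mem_image.1 hp
    obtain ⟨σ', hσ', he⟩ := Finset.mem_image.1 h2
    have hp0 : p = 0 := (insMax_inj he.symm).2
    rcases mem_slots.1 hps with rfl | ⟨t, ht, hte⟩
    · have : ((Fin.last k : Fin (k + 1)) : ℕ) = 0 := by rw [hp0]; rfl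
      simp [Fin.val_last] at this; omega
    · rw [hp0] at hte; simp at hte
  have := Finset.card_le_card hsub
  rw [Finset.card_union_of_disjoint hdisj, hcard1, hcard2] at this
  calc (j + 1) * eulerian k j + eulerian k (j - 1)
      = N.card * (j + 1) + N'.card := by rw [eulerian, eulerian, ← hN, ← hN', Nat.mul_comm]
    _ ≤ _ := this
  

end Insert

/-! ### small eulerian facts -/

lemma numDescents_one (m : ℕ) : numDescents m (1 : Equiv.Perm (Fin m)) = 0 := by
  rw [numDescents, Finset.card_eq_zero, Finset.filter_eq_empty_iff]
  rintro t -
  rintro ⟨h, hlt⟩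
  simp only [Equiv.Perm.coe_one, id_eq] at hlt
  rw [Fin.lt_def] at hlt
  simp at hlt

lemma one_le_eulerian_zero (m : ℕ) : 1 ≤ eulerian m 0 := by
  rw [eulerian]
  refine Finset.card_pos.2 ⟨1, Finset.mem_filter.2 ⟨Finset.mem_univ _, numDescents_one m⟩⟩

lemma numDescents_revPerm (m : ℕ) : numDescents m (Fin.revPerm : Equiv.Perm (Fin m)) = m - 1 := by
  rw [numDescents]
  have : ((Finset.range m).filter fun i =>
      ∃ h : i + 1 < m, (Fin.revPerm : Equiv.Perm (Fin m)) ⟨i + 1, h⟩ <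
        Fin.revPerm ⟨i, Nat.lt_of_succ_lt h⟩) = Finset.range (m - 1) := by
    ext t
    simp only [Finset.mem_filter, Finset.mem_range]
    constructor
    · rintro ⟨-, h, -⟩; omega
    · intro ht
      refine ⟨by omega, by omega, ?_⟩
      simp only [Fin.revPerm_apply]
      rw [Fin.rev_lt_rev, Fin.lt_def]
      simp
  rw [this, Finset.card_range]

lemma one_le_eulerian_top (m : ℕ) : 1 ≤ eulerian m (m - 1) := by
  rw [eulerian]
  exact Finset.card_pos.2 ⟨Fin.revPerm,
    Finset.mem_filter.2 ⟨Finset.mem_univ _, numDescents_revPerm m⟩⟩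

lemma numDescents_lt (m : ℕ) (hm : 1 ≤ m) (σ : Equiv.Perm (Fin m)) :
    numDescents m σ < m := by
  rw [numDescents_eq_card_dset]
  have hsub : dset m σ ⊆ Finset.range (m - 1) := by
    intro t ht
    obtain ⟨h, -⟩ := mem_dset.1 ht
    rw [Finset.mem_range]; omega
  have := Finset.card_le_card hsub
  rw [Finset.card_range] at this
  omega

lemma eulerian_self (m : ℕ) (hm : 1 ≤ m) : eulerian m m = 0 := by
  rw [eulerian, Finset.card_eq_zero, Finset.filter_eq_empty_iff]
  rintro σ -
  exact Nat.ne_of_lt (numDescents_lt m hm σ)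

/-! ### the sum T -/

noncomputable def Tsum (n i : ℕ) : ℕ := ∑ k ∈ Finset.Icc i n, n.choose k * eulerian k (i - 1)

lemma Tsum_rec (n i : ℕ) (h2 : 2 ≤ i) (hin : i ≤ n) :
    (i + 1) * Tsum n i + Tsum n (i - 1) ≤ Tsum (n + 1) i := by
  have hIcc : Finset.Icc i (n + 1) = insert (n + 1) (Finset.Icc i n) := by
    ext t; simp only [Finset.mem_Icc, Finset.mem_insert]; omega
  have hIcc' : Finset.Icc (i - 1) n = insert (i - 1) (Finset.Icc i n) := by
    ext t; simp only [Finset.mem_Icc, Finset.mem_insert]; omega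
  have step1 : Tsum (n + 1) i =
      (∑ k ∈ Finset.Icc i (n + 1), n.choose k * eulerian k (i - 1)) +
      (∑ k ∈ Finset.Icc i (n + 1), n.choose (k - 1) * eulerian k (i - 1)) := by
    rw [Tsum, ← Finset.sum_add_distrib]
    refine Finset.sum_congr rfl fun k hk => ?_
    have hk1 : 1 ≤ k := by rw [Finset.mem_Icc] at hk; omega
    have : (n + 1).choose k = n.choose (k - 1) + n.choose k := by
      rcases Nat.exists_eq_add_of_le hk1 with ⟨k', rfl⟩
      rw [Nat.add_comm 1 k', Nat.choose_succ_succ' n k']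
      simp
    rw [this]; ring
  have e1 : (∑ k ∈ Finset.Icc i (n + 1), n.choose k * eulerian k (i - 1)) = Tsum n i := by
    rw [hIcc, Finset.sum_insert (by simp), Nat.choose_eq_zero_of_lt (by omega)]
    simp [Tsum]
  have e2 : (∑ k ∈ Finset.Icc i (n + 1), n.choose (k - 1) * eulerian k (i - 1)) =
      ∑ k ∈ Finset.Icc (i - 1) n, n.choose k * eulerian (k + 1) (i - 1) := by
    have hmap : Finset.Icc i (n + 1) = (Finset.Icc (i - 1) n).map (addRightEmbedding 1) := by
      rw [Finset.map_add_right_Icc]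
      congr 1 <;> omega
    rw [hmap, Finset.sum_map]
    refine Finset.sum_congr rfl fun k _ => ?_
    simp [addRightEmbedding]
  have e3 : ∑ k ∈ Finset.Icc (i - 1) n, n.choose k * (i * eulerian k (i - 1) + eulerian k (i - 2)) ≤
      ∑ k ∈ Finset.Icc (i - 1) n, n.choose k * eulerian (k + 1) (i - 1) := by
    refine Finset.sum_le_sum fun k hk => ?_
    rw [Finset.mem_Icc] at hk
    refine Nat.mul_le_mul_left _ ?_
    have := eulerian_rec k (i - 1) (by omega) (by omega)
    have hi1 : i - 1 + 1 = i := by omega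
    have hi2 : i - 1 - 1 = i - 2 := by omega
    rw [hi1, hi2] at this
    exact this
  have e4 : ∑ k ∈ Finset.Icc (i - 1) n, n.choose k * (i * eulerian k (i - 1) + eulerian k (i - 2)) =
      i * (∑ k ∈ Finset.Icc (i - 1) n, n.choose k * eulerian k (i - 1)) +
        ∑ k ∈ Finset.Icc (i - 1) n, n.choose k * eulerian k (i - 2) := by
    rw [Finset.mul_sum, ← Finset.sum_add_distrib]
    refine Finset.sum_congr rfl fun k _ => by ring
  have e5 : (∑ k ∈ Finset.Icc (i - 1) n, n.choose k * eulerian k (i - 1)) = Tsum n i := by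
    rw [hIcc', Finset.sum_insert (by simp; omega)]
    rw [show i - 1 = i - 1 from rfl]
    have : eulerian (i - 1) (i - 1) = 0 := eulerian_self (i - 1) (by omega)
    rw [this, Nat.mul_zero, Nat.zero_add, Tsum]
  have e6 : (∑ k ∈ Finset.Icc (i - 1) n, n.choose k * eulerian k (i - 2)) = Tsum n (i - 1) := by
    rw [Tsum]
    refine Finset.sum_congr rfl fun k _ => by rw [Nat.sub_sub]
  calc (i + 1) * Tsum n i + Tsum n (i - 1)
      = Tsum n i + (i * Tsum n i + Tsum n (i - 1)) := by ring
    _ ≤ Tsum n i + ∑ k ∈ Finset.Icc (i - 1) n, n.choose k * eulerian (k + 1) (i - 1) := by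
        refine Nat.add_le_add_left ?_ _
        rw [← e5, ← e6, ← e4]
        exact e3
    _ = Tsum (n + 1) i := by rw [step1, e1, e2]

/-! ### binomial inequality -/

lemma choose_ineq (n i : ℕ) (h2 : 2 ≤ i) (hin : i ≤ n) :
    n.choose (i - 1) * n.choose i + i * (n.choose (i - 1) * n.choose (i + 1)) ≤
      n.choose (i - 2) * n.choose (i + 1) + i * (n.choose i * n.choose i) := by
  obtain ⟨i2, rfl⟩ : ∃ i2, i = i2 + 2 := ⟨i - 2, by omega⟩
  simp only [show i2 + 2 - 1 = i2 + 1 from by omega, show i2 + 2 - 2 = i2 from by omega,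
    show i2 + 2 + 1 = i2 + 3 from by omega]
  set u := n - (i2 + 2) with hu
  set a := n.choose i2 with ha
  set b := n.choose (i2 + 1) with hb
  set c := n.choose (i2 + 2) with hc
  set d := n.choose (i2 + 3) with hd
  -- relations
  have r1 : c * (i2 + 2) = b * (u + 1) := by
    have := Nat.choose_succ_right_eq n (i2 + 1)
    rw [show n - (i2 + 1) = u + 1 from by omega] at this
    exact this
  have r3 : d * (i2 + 3) = c * u := by
    have := Nat.choose_succ_right_eq n (i2 + 2)
    rw [show n - (i2 + 2) = u from by omega] at this
    exact this
  have hpos : 0 < (u + 1) * (i2 + 3) := by positivity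
  refine Nat.le_of_mul_le_mul_right ?_ hpos
  have e1 : (b * c + (i2 + 2) * (b * d)) * ((u + 1) * (i2 + 3)) =
      c * c * ((i2 + 2) * (i2 + 3)) + c * c * ((i2 + 2) * (i2 + 2) * u) := by
    have expand : (b * c + (i2 + 2) * (b * d)) * ((u + 1) * (i2 + 3)) =
        (b * (u + 1)) * (c * (i2 + 3)) + (i2 + 2) * ((b * (u + 1)) * (d * (i2 + 3))) := by ring
    rw [expand, ← r1, r3]
    ring
  rw [e1]
  have e2 : c * c * ((i2 + 2) * (i2 + 2) * u) ≤ c * c * ((i2 + 2) * (i2 + 3) * u) := by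
    refine Nat.mul_le_mul_left _ ?_
    refine Nat.mul_le_mul_right _ ?_
    exact Nat.mul_le_mul_left _ (by omega)
  calc c * c * ((i2 + 2) * (i2 + 3)) + c * c * ((i2 + 2) * (i2 + 2) * u)
      ≤ c * c * ((i2 + 2) * (i2 + 3)) + c * c * ((i2 + 2) * (i2 + 3) * u) :=
        Nat.add_le_add_left e2 _
    _ = (i2 + 2) * (c * c) * ((u + 1) * (i2 + 3)) := by ring
    _ ≤ (a * d + (i2 + 2) * (c * c)) * ((u + 1) * (i2 + 3)) :=
        Nat.mul_le_mul_right _ (Nat.le_add_left _ _)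

/-! ### base case i = 1 -/

lemma pow_bound : ∀ n : ℕ, n * (n + 1) + 2 ≤ 2 ^ (n + 1) := by
  intro n
  induction n with
  | zero => simp
  | succ m ih =>
    rcases Nat.eq_zero_or_pos m with rfl | hm
    · norm_num
    · have h1 : (m + 1) * (m + 2) + 2 ≤ 2 * (m * (m + 1) + 2) := by nlinarith
      calc (m + 1) * (m + 1 + 1) + 2 ≤ 2 * (m * (m + 1) + 2) := h1
        _ ≤ 2 * 2 ^ (m + 1) := Nat.mul_le_mul_left 2 ih
        _ = 2 ^ (m + 1 + 1) := by rw [pow_succ]; ring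

lemma sum_Icc_choose (n : ℕ) : ∑ k ∈ Finset.Icc 1 n, n.choose k = 2 ^ n - 1 := by
  have hins : Finset.range (n + 1) = insert 0 (Finset.Icc 1 n) := by
    ext t; simp only [Finset.mem_range, Finset.mem_insert, Finset.mem_Icc]; omega
  have := Nat.sum_range_choose n
  rw [hins, Finset.sum_insert (by simp)] at this
  simp only [Nat.choose_zero_right] at this
  omega

lemma base_one (n : ℕ) (hn : 1 ≤ n) :
    n.choose 1 * n.choose 1 ≤ n.choose 0 * n.choose 2 + Tsum n 1 := by
  have hT : 2 ^ n - 1 ≤ Tsum n 1 := by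
    rw [Tsum, ← sum_Icc_choose n]
    refine Finset.sum_le_sum fun k _ => ?_
    have := one_le_eulerian_zero k
    calc n.choose k = n.choose k * 1 := by ring
      _ ≤ n.choose k * eulerian k (1 - 1) := Nat.mul_le_mul_left _ (by simpa using this)
  simp only [Nat.choose_one_right, Nat.choose_zero_right, Nat.one_mul]
  have hdvd : 2 ∣ n * (n - 1) := by
    have h := (Nat.even_mul_succ_self (n - 1)).two_dvd
    rw [show n - 1 + 1 = n from by omega] at h
    rwa [Nat.mul_comm]
  have h2c : 2 * n.choose 2 = n * (n - 1) := by
    rw [Nat.choose_two_right]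
    exact Nat.mul_div_cancel' hdvd
  have hp := pow_bound n
  have hpow1 : 1 ≤ 2 ^ n := Nat.one_le_two_pow
  set q := 2 ^ n - 1 with hq
  have hq' : 2 ^ n = q + 1 := by omega
  have hp' : n * n + n ≤ 2 * q := by
    have h2 : 2 ^ (n + 1) = 2 * 2 ^ n := by rw [pow_succ]; ring
    have h3 : n * (n + 1) = n * n + n := by ring
    linarith [hp]
  have hx : n * (n - 1) + n = n * n := by
    rw [← Nat.mul_succ, Nat.succ_eq_add_one, show n - 1 + 1 = n from by omega]
  suffices h : n * n ≤ n.choose 2 + q by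
    calc n * n ≤ n.choose 2 + q := h
      _ ≤ n.choose 2 + Tsum n 1 := Nat.add_le_add_left hT _
  linarith [h2c, hx, hp']

lemma main_nat : ∀ n i : ℕ, 1 ≤ i → i ≤ n →
    n.choose i * n.choose i ≤ n.choose (i - 1) * n.choose (i + 1) + Tsum n i := by
  intro n
  induction n with
  | zero => intro i h1 h2; omega
  | succ n ih =>
    intro i hi1 hin
    by_cases hitop : i = n + 1
    · subst hitop
      have hT : 1 ≤ Tsum (n + 1) (n + 1) := by
        rw [Tsum, Finset.Icc_self, Finset.sum_singleton, Nat.choose_self, Nat.one_mul]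
        exact one_le_eulerian_top (n + 1)
      rw [Nat.choose_self]
      omega
    · by_cases hione : i = 1
      · subst hione
        exact base_one (n + 1) (by omega)
      · -- 2 ≤ i ≤ n
        have h2i : 2 ≤ i := by omega
        have hin' : i ≤ n := by omega
        have IH1 := ih i (by omega) hin'
        have IH2 := ih (i - 1) (by omega) (by omega)
        rw [show i - 1 - 1 = i - 2 from by omega, show i - 1 + 1 = i from by omega] at IH2
        have TR := Tsum_rec n i h2i hin'
        have CI := choose_ineq n i h2i hin'
        have hP1 : (n + 1).choose i = n.choose (i - 1) + n.choose i := by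
          have := Nat.choose_succ_succ' n (i - 1)
          rwa [show i - 1 + 1 = i from by omega] at this
        have hP2 : (n + 1).choose (i - 1) = n.choose (i - 2) + n.choose (i - 1) := by
          have := Nat.choose_succ_succ' n (i - 2)
          rwa [show i - 2 + 1 = i - 1 from by omega] at this
        have hP3 : (n + 1).choose (i + 1) = n.choose i + n.choose (i + 1) :=
          Nat.choose_succ_succ' n i
        rw [hP1, hP2, hP3]
        set a := n.choose (i - 2) with hA
        set b := n.choose (i - 1) with hB
        set c := n.choose i with hC
        set d := n.choose (i + 1) with hD
        set T1 := Tsum n i with hT1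
        set T2 := Tsum n (i - 1) with hT2
        set T3 := Tsum (n + 1) i with hT3
        -- K : algebraic consequence of CI
        have K : (b + c) * (b + c) + ((i + 1) * (b * d) + a * c) ≤
            (a + b) * (c + d) + ((i + 1) * (c * c) + b * b) := by nlinarith [CI]
        have K2 : (i + 1) * (c * c) ≤ (i + 1) * (b * d) + (i + 1) * T1 := by
          have := Nat.mul_le_mul_left (i + 1) IH1
          rwa [Nat.mul_add] at this
        linarith [K, K2, IH2, TR]

/-- `h_i(As^n) ≤ h_i(St^n)`: for `n ≥ 1` and `1 ≤ i ≤ n`,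
`(1/(n+1))·binom(n+1,i)·binom(n+1,i+1) ≤ Σ_{k=i}^{n} binom(n,k)·A(k,i−1)`. -/
theorem associahedron_le_stellohedron_h (n i : ℕ) (hn : 1 ≤ n) (hi1 : 1 ≤ i) (hi : i ≤ n) :
    (1 / ((n : ℚ) + 1)) * ((n + 1).choose i : ℚ) * ((n + 1).choose (i + 1) : ℚ) ≤
      ∑ k ∈ Finset.Icc i n, ((n.choose k : ℚ) * (eulerian k (i - 1) : ℚ)) := by
  have key := main_nat n i hi1 hi
  -- Pascal
  have hP1 : (n + 1).choose i = n.choose (i - 1) + n.choose i := by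
    have := Nat.choose_succ_succ' n (i - 1)
    rwa [show i - 1 + 1 = i from by omega] at this
  have hP3 : (n + 1).choose (i + 1) = n.choose i + n.choose (i + 1) :=
    Nat.choose_succ_succ' n i
  -- ratio relations
  have r1 : n.choose i * i = n.choose (i - 1) * (n - i + 1) := by
    have := Nat.choose_succ_right_eq n (i - 1)
    rwa [show i - 1 + 1 = i from by omega, show n - (i - 1) = n - i + 1 from by omega] at this
  have r3 : n.choose (i + 1) * (i + 1) = n.choose i * (n - i) :=
    Nat.choose_succ_right_eq n i
  set qb : ℚ := (n.choose (i - 1) : ℚ) with hqb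
  set qc : ℚ := (n.choose i : ℚ) with hqc
  set qd : ℚ := (n.choose (i + 1) : ℚ) with hqd
  have hni : (i : ℚ) ≤ (n : ℚ) := by exact_mod_cast hi
  have hA0 : (n : ℚ) - i + 1 ≠ 0 := by linarith
  have hB0 : (i : ℚ) + 1 ≠ 0 := by positivity
  have r1q : qc * i = qb * ((n : ℚ) - i + 1) := by
    have := congrArg (Nat.cast : ℕ → ℚ) r1
    push_cast at this
    rw [Nat.cast_sub hi] at this
    push_cast at this
    linarith [this]
  have r3q : qd * ((i : ℚ) + 1) = qc * ((n : ℚ) - i) := by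
    have := congrArg (Nat.cast : ℕ → ℚ) r3
    push_cast at this
    rw [Nat.cast_sub hi] at this
    push_cast at this
    linarith [this]
  have hb' : qb = qc * i / ((n : ℚ) - i + 1) := by
    rw [eq_div_iff hA0]; linarith [r1q]
  have hd' : qd = qc * ((n : ℚ) - i) / ((i : ℚ) + 1) := by
    rw [eq_div_iff hB0]; linarith [r3q]
  have hid : (1 / ((n : ℚ) + 1)) * ((n + 1).choose i : ℚ) * ((n + 1).choose (i + 1) : ℚ) =
      qc ^ 2 - qb * qd := by
    rw [hP1, hP3]
    push_cast
    rw [← hqb, ← hqc, ← hqd, hb', hd']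
    have hn1 : (n : ℚ) + 1 ≠ 0 := by positivity
    field_simp
    ring
  rw [hid]
  have hcast : ((Tsum n i : ℕ) : ℚ) =
      ∑ k ∈ Finset.Icc i n, ((n.choose k : ℚ) * (eulerian k (i - 1) : ℚ)) := by
    rw [Tsum]
    push_cast
    rfl
  rw [← hcast]
  have keyq : qc ^ 2 ≤ qb * qd + (Tsum n i : ℚ) := by
    have h := key
    have : ((n.choose i * n.choose i : ℕ) : ℚ) ≤
        ((n.choose (i - 1) * n.choose (i + 1) + Tsum n i : ℕ) : ℚ) := by exact_mod_cast h
    push_cast at this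
    rw [← hqb, ← hqc, ← hqd] at this
    nlinarith [this]
  linarith [keyq]
end
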